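/- Uniqueness of Serre functors on k-linear categories: if (S,ψ) and (S′,ψ′) are right Serre k-functors on the same k-linear category C, then the functors S and S′ are naturally isomorphic, i.e. there is an isomorphism S ≅ S′ in the functor category C ⥤ C. -/
import Mathlib


open CategoryTheory

universe w v u

/-- Uniqueness of Serre functors on k-linear categories: two right Serre k-functors on the
same k-linear category are naturally isomorphic. -/
theorem rightSerre_linear_unique_up_to_iso
    (k : Type w) [CommRing k] {C : Type u} [Category.{v} C] [Preadditive C]
    [CategoryTheory.Linear k C]
    (S : C ⥤ C) [S.Additive] [S.Linear k] (S' : C ⥤ C) [S'.Additive] [S'.Linear k]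
    (ψ : ∀ X Y : C, (X ⟶ S.obj Y) ≃ₗ[k] Module.Dual k (Y ⟶ X))
    (ψ' : ∀ X Y : C, (X ⟶ S'.obj Y) ≃ₗ[k] Module.Dual k (Y ⟶ X))
    (hnat₁ : ∀ (X Z Y : C) (x : Z ⟶ X) (f : X ⟶ S.obj Y) (z : Y ⟶ Z),
        ψ Z Y (x ≫ f) z = ψ X Y f (z ≫ x))
    (hnat₂ : ∀ (X Y Z : C) (y : Y ⟶ Z) (f : X ⟶ S.obj Y) (h : Z ⟶ X),
        ψ X Z (f ≫ S.map y) h = ψ X Y f (y ≫ h))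
    (hnat₁' : ∀ (X Z Y : C) (x : Z ⟶ X) (f : X ⟶ S'.obj Y) (z : Y ⟶ Z),
        ψ' Z Y (x ≫ f) z = ψ' X Y f (z ≫ x))
    (hnat₂' : ∀ (X Y Z : C) (y : Y ⟶ Z) (f : X ⟶ S'.obj Y) (h : Z ⟶ X),
        ψ' X Z (f ≫ S'.map y) h = ψ' X Y f (y ≫ h)) :
    Nonempty (S ≅ S') := by
  classical
  let α : ∀ Y : C, S.obj Y ⟶ S'.obj Y :=
    fun Y => (ψ' (S.obj Y) Y).symm (ψ (S.obj Y) Y (𝟙 _))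
  let β : ∀ Y : C, S'.obj Y ⟶ S.obj Y :=
    fun Y => (ψ (S'.obj Y) Y).symm (ψ' (S'.obj Y) Y (𝟙 _))
  have key : ∀ (X Y : C) (f : X ⟶ S.obj Y), ψ' X Y (f ≫ α Y) = ψ X Y f := by
    intro X Y f
    apply LinearMap.ext; intro z
    have h1 := hnat₁' (S.obj Y) X Y f (α Y) z
    have h2 := hnat₁ (S.obj Y) X Y f (𝟙 _) z
    simp only [Category.comp_id] at h2
    rw [h1, show (α Y) = (ψ' (S.obj Y) Y).symm (ψ (S.obj Y) Y (𝟙 _)) from rfl,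
      LinearEquiv.apply_symm_apply, ← h2]
  have key' : ∀ (X Y : C) (g : X ⟶ S'.obj Y), ψ X Y (g ≫ β Y) = ψ' X Y g := by
    intro X Y g
    apply LinearMap.ext; intro z
    have h1 := hnat₁ (S'.obj Y) X Y g (β Y) z
    have h2 := hnat₁' (S'.obj Y) X Y g (𝟙 _) z
    simp only [Category.comp_id] at h2
    rw [h1, show (β Y) = (ψ (S'.obj Y) Y).symm (ψ' (S'.obj Y) Y (𝟙 _)) from rfl,
      LinearEquiv.apply_symm_apply, ← h2]
  have hαβ : ∀ Y : C, α Y ≫ β Y = 𝟙 (S.obj Y) := by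
    intro Y
    apply (ψ (S.obj Y) Y).injective
    rw [key' (S.obj Y) Y (α Y)]
    exact (ψ' (S.obj Y) Y).apply_symm_apply _
  have hβα : ∀ Y : C, β Y ≫ α Y = 𝟙 (S'.obj Y) := by
    intro Y
    apply (ψ' (S'.obj Y) Y).injective
    rw [key (S'.obj Y) Y (β Y)]
    exact (ψ (S'.obj Y) Y).apply_symm_apply _
  have hnat : ∀ {Y Z : C} (y : Y ⟶ Z), S.map y ≫ α Z = α Y ≫ S'.map y := by
    intro Y Z y
    apply (ψ' (S.obj Y) Z).injective
    apply LinearMap.ext; intro h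
    have hk : ψ' (S.obj Y) Z (S.map y ≫ α Z) h = ψ (S.obj Y) Z (S.map y) h := by
      rw [key (S.obj Y) Z (S.map y)]
    rw [hk]
    have h1 : ψ (S.obj Y) Z (S.map y) h = ψ (S.obj Y) Y (𝟙 _) (y ≫ h) := by
      have := hnat₂ (S.obj Y) Y Z y (𝟙 _) h
      simpa using this
    have h2 : ψ' (S.obj Y) Z (α Y ≫ S'.map y) h = ψ' (S.obj Y) Y (α Y) (y ≫ h) :=
      hnat₂' (S.obj Y) Y Z y (α Y) h
    rw [h1, h2, show (α Y) = (ψ' (S.obj Y) Y).symm (ψ (S.obj Y) Y (𝟙 _)) from rfl,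
      LinearEquiv.apply_symm_apply]
  exact ⟨NatIso.ofComponents (fun Y => ⟨α Y, β Y, hαβ Y, hβα Y⟩) (fun y => hnat y)⟩
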